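/- For every a ∈ ℝ with −3 ≤ a < −1, the ternary quartic f_a = a(x⁴ + y⁴ + z⁴) + 6(x²y² + x²z² + y²z²) has real rank exactly 7: rk(f_a) = 7. -/

import Mathlib

set_option maxHeartbeats 4000000


open MvPolynomial

/-- The real (symmetric) rank of a polynomial `f` in `n` variables with respect to
`d`-th powers of real linear forms: the least `k` such that
`f = ∑ j, λⱼ • lⱼ ^ d` with `λⱼ ∈ ℝ` and `lⱼ` real linear forms. -/
noncomputable def realRank (n d : ℕ) (f : MvPolynomial (Fin n) ℝ) : ℕ :=
  sInf {k | ∃ (lam : Fin k → ℝ) (l : Fin k → Fin n → ℝ),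
    f = ∑ j, MvPolynomial.C (lam j) * (∑ i, MvPolynomial.C (l j i) * MvPolynomial.X i) ^ d}

/-- Exponent vectors of monomials of degree `d` in `n` variables. -/
abbrev Mon (n d : ℕ) := {e : Fin n → Fin (d + 1) // ∑ i, (e i : ℕ) = d}

/-- Coefficient space of degree-`d` forms in `n` variables, with its
Euclidean (product) topology. -/
abbrev Coef (n d : ℕ) := Mon n d → ℝ

/-- The degree-`d` form whose coefficients are given by `c`. -/
noncomputable def toForm (n d : ℕ) (c : Coef n d) : MvPolynomial (Fin n) ℝ :=
  ∑ e : Mon n d, MvPolynomial.C (c e) * ∏ i, MvPolynomial.X i ^ ((e.1 i : ℕ))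

/-- `r` is a typical rank for degree-`d` forms in `n` variables. -/
def IsTypicalRank (n d r : ℕ) : Prop :=
  (interior {c : Coef n d | realRank n d (toForm n d c) = r}).Nonempty

/-- The even symmetric ternary quartic `f_a = a(x⁴ + y⁴ + z⁴) + 6(x²y² + x²z² + y²z²)`. -/
noncomputable def fa (a : ℝ) : MvPolynomial (Fin 3) ℝ :=
  C a * (X 0 ^ 4 + X 1 ^ 4 + X 2 ^ 4)
    + C 6 * (X 0 ^ 2 * X 1 ^ 2 + X 0 ^ 2 * X 2 ^ 2 + X 1 ^ 2 * X 2 ^ 2)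


section RankSeven

private def vm (c : Fin 6 → Fin 3 → ℝ) (j : Fin 6) : Fin 6 → ℝ
  | 0 => c j 0 ^ 2 | 1 => c j 1 ^ 2 | 2 => c j 2 ^ 2
  | 3 => 2 * (c j 0 * c j 1) | 4 => 2 * (c j 0 * c j 2) | 5 => 2 * (c j 1 * c j 2)

private def Mm (a : ℝ) (x : Fin 6 → ℝ) : Fin 6 → ℝ
  | 0 => a * x 0 + x 1 + x 2 | 1 => x 0 + a * x 1 + x 2 | 2 => x 0 + x 1 + a * x 2
  | 3 => 4 * x 3 | 4 => 4 * x 4 | 5 => 4 * x 5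

private noncomputable def Nm (a : ℝ) (x : Fin 6 → ℝ) : Fin 6 → ℝ
  | 0 => ((a+1) * x 0 - x 1 - x 2) / ((a-1)*(a+2))
  | 1 => ((a+1) * x 1 - x 0 - x 2) / ((a-1)*(a+2))
  | 2 => ((a+1) * x 2 - x 0 - x 1) / ((a-1)*(a+2))
  | 3 => x 3 / 4 | 4 => x 4 / 4 | 5 => x 5 / 4

private def x01 : Fin 6 → ℝ
  | 0 => 1 | 1 => -1 | 2 => 0 | 3 => 0 | 4 => 0 | 5 => 0

private def x3u : Fin 6 → ℝ
  | 0 => 0 | 1 => 0 | 2 => 0 | 3 => 1 | 4 => 0 | 5 => 0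

private def q0v : Fin 6 → ℝ
  | 0 => 1 | 1 => 1 | 2 => 1 | 3 => 0 | 4 => 0 | 5 => 0

private noncomputable def w7 (a : ℝ) : Fin 7 → ℝ
  | 0 => a-1 | 1 => a-1 | 2 => a-1 | 3 => 1/4 | 4 => 1/4 | 5 => 1/4 | 6 => 1/4

private def L7 : Fin 7 → Fin 3 → ℝ
  | 0, 0 => 1 | 0, 1 => 0 | 0, 2 => 0
  | 1, 0 => 0 | 1, 1 => 1 | 1, 2 => 0
  | 2, 0 => 0 | 2, 1 => 0 | 2, 2 => 1
  | 3, 0 => 1 | 3, 1 => 1 | 3, 2 => 1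
  | 4, 0 => 1 | 4, 1 => 1 | 4, 2 => -1
  | 5, 0 => 1 | 5, 1 => -1 | 5, 2 => 1
  | 6, 0 => 1 | 6, 1 => -1 | 6, 2 => -1

private lemma inj6 (M : Matrix (Fin 6) (Fin 6) ℝ) (h : M.det ≠ 0) {t s : Fin 6 → ℝ}
    (he : M.mulVec t = M.mulVec s) : t = s := by
  have := congrArg (fun z => M⁻¹.mulVec z) he
  simpa [Matrix.mulVec_mulVec, Matrix.nonsing_inv_mul _ (Ne.isUnit h), Matrix.one_mulVec]
    using this

private lemma Pnonpos (a u v w : ℝ) (h1 : -3 ≤ a) (h2 : a < -1) :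
    (a+1) * (u^4+v^4+w^4) + (a^2+a-4) * (u^2*v^2+u^2*w^2+v^2*w^2) ≤ 0 := by
  have hs : u^2*v^2+u^2*w^2+v^2*w^2 ≤ u^4+v^4+w^4 := by
    nlinarith [sq_nonneg (u^2-v^2), sq_nonneg (u^2-w^2), sq_nonneg (v^2-w^2)]
  have h22 : (0:ℝ) ≤ u^2*v^2+u^2*w^2+v^2*w^2 := by positivity
  nlinarith [mul_nonneg (by linarith : (0:ℝ) ≤ -1-a)
      (by linarith : (0:ℝ) ≤ u^4+v^4+w^4 - (u^2*v^2+u^2*w^2+v^2*w^2)),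
    mul_nonneg (mul_nonneg (by linarith : (0:ℝ) ≤ a+3) (by linarith : (0:ℝ) ≤ 1-a)) h22]

private lemma no_six (a : ℝ) (h₁ : -3 ≤ a) (h₂ : a < -1)
    (lam : Fin 6 → ℝ) (c : Fin 6 → Fin 3 → ℝ)
    (h : ∀ x y z : ℝ,
      a * (x^4+y^4+z^4) + 6 * (x^2*y^2+x^2*z^2+y^2*z^2)
        = ∑ j : Fin 6, lam j * (c j 0 * x + c j 1 * y + c j 2 * z)^4) : False := by
  simp only [Fin.sum_univ_six] at h
  have P1 := h 1 0 0
  have P2 := h 0 1 0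
  have P3 := h 0 0 1
  have P4 := h 1 1 0
  have P5 := h 1 (-1) 0
  have P6 := h 2 1 0
  have P7 := h 2 (-1) 0
  have P8 := h 1 0 1
  have P9 := h 1 0 (-1)
  have P10 := h 2 0 1
  have P11 := h 2 0 (-1)
  have P12 := h 0 1 1
  have P13 := h 0 1 (-1)
  have P14 := h 0 2 1
  have P15 := h 0 2 (-1)
  have P16 := h 1 1 1
  have P17 := h 1 1 (-1)
  have P18 := h 1 (-1) 1
  have hS004 : lam 0 * (c 0 2 ^ 4) + lam 1 * (c 1 2 ^ 4) + lam 2 * (c 2 2 ^ 4) + lam 3 * (c 3 2 ^ 4) + lam 4 * (c 4 2 ^ 4) + lam 5 * (c 5 2 ^ 4) = a := by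
    linear_combination (-1) * P3
  have hS013 : lam 0 * (c 0 1 * c 0 2 ^ 3) + lam 1 * (c 1 1 * c 1 2 ^ 3) + lam 2 * (c 2 1 * c 2 2 ^ 3) + lam 3 * (c 3 1 * c 3 2 ^ 3) + lam 4 * (c 4 1 * c 4 2 ^ 3) + lam 5 * (c 5 1 * c 5 2 ^ 3) = 0 := by
    linear_combination (-1/2) * P2 + (1/8) * P3 + (-1/4) * P12 + (1/12) * P13 + (1/24) * P14
  have hS022 : lam 0 * (c 0 1 ^ 2 * c 0 2 ^ 2) + lam 1 * (c 1 1 ^ 2 * c 1 2 ^ 2) + lam 2 * (c 2 1 ^ 2 * c 2 2 ^ 2) + lam 3 * (c 3 1 ^ 2 * c 3 2 ^ 2) + lam 4 * (c 4 1 ^ 2 * c 4 2 ^ 2) + lam 5 * (c 5 1 ^ 2 * c 5 2 ^ 2) = 1 := by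
    linear_combination (1/6) * P2 + (1/6) * P3 + (-1/12) * P12 + (-1/12) * P13
  have hS031 : lam 0 * (c 0 1 ^ 3 * c 0 2) + lam 1 * (c 1 1 ^ 3 * c 1 2) + lam 2 * (c 2 1 ^ 3 * c 2 2) + lam 3 * (c 3 1 ^ 3 * c 3 2) + lam 4 * (c 4 1 ^ 3 * c 4 2) + lam 5 * (c 5 1 ^ 3 * c 5 2) = 0 := by
    linear_combination (1/2) * P2 + (-1/8) * P3 + (1/8) * P12 + (1/24) * P13 + (-1/24) * P14
  have hS040 : lam 0 * (c 0 1 ^ 4) + lam 1 * (c 1 1 ^ 4) + lam 2 * (c 2 1 ^ 4) + lam 3 * (c 3 1 ^ 4) + lam 4 * (c 4 1 ^ 4) + lam 5 * (c 5 1 ^ 4) = a := by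
    linear_combination (-1) * P2
  have hS103 : lam 0 * (c 0 0 * c 0 2 ^ 3) + lam 1 * (c 1 0 * c 1 2 ^ 3) + lam 2 * (c 2 0 * c 2 2 ^ 3) + lam 3 * (c 3 0 * c 3 2 ^ 3) + lam 4 * (c 4 0 * c 4 2 ^ 3) + lam 5 * (c 5 0 * c 5 2 ^ 3) = 0 := by
    linear_combination (-1/2) * P1 + (1/8) * P3 + (-1/4) * P8 + (1/12) * P9 + (1/24) * P10
  have hS112 : lam 0 * (c 0 0 * c 0 1 * c 0 2 ^ 2) + lam 1 * (c 1 0 * c 1 1 * c 1 2 ^ 2) + lam 2 * (c 2 0 * c 2 1 * c 2 2 ^ 2) + lam 3 * (c 3 0 * c 3 1 * c 3 2 ^ 2) + lam 4 * (c 4 0 * c 4 1 * c 4 2 ^ 2) + lam 5 * (c 5 0 * c 5 1 * c 5 2 ^ 2) = 0 := by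
    linear_combination (-1/12) * P1 + (-1/12) * P2 + (-1/12) * P3 + (1/12) * P4 + (1/24) * P8 + (1/24) * P9 + (1/24) * P12 + (1/24) * P13 + (-1/24) * P16 + (-1/24) * P17
  have hS121 : lam 0 * (c 0 0 * c 0 1 ^ 2 * c 0 2) + lam 1 * (c 1 0 * c 1 1 ^ 2 * c 1 2) + lam 2 * (c 2 0 * c 2 1 ^ 2 * c 2 2) + lam 3 * (c 3 0 * c 3 1 ^ 2 * c 3 2) + lam 4 * (c 4 0 * c 4 1 ^ 2 * c 4 2) + lam 5 * (c 5 0 * c 5 1 ^ 2 * c 5 2) = 0 := by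
    linear_combination (-1/12) * P1 + (-1/12) * P2 + (-1/12) * P3 + (1/24) * P4 + (1/24) * P5 + (1/12) * P8 + (1/24) * P12 + (1/24) * P13 + (-1/24) * P16 + (-1/24) * P18
  have hS130 : lam 0 * (c 0 0 * c 0 1 ^ 3) + lam 1 * (c 1 0 * c 1 1 ^ 3) + lam 2 * (c 2 0 * c 2 1 ^ 3) + lam 3 * (c 3 0 * c 3 1 ^ 3) + lam 4 * (c 4 0 * c 4 1 ^ 3) + lam 5 * (c 5 0 * c 5 1 ^ 3) = 0 := by
    linear_combination (-1/2) * P1 + (1/8) * P2 + (-1/4) * P4 + (1/12) * P5 + (1/24) * P6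
  have hS202 : lam 0 * (c 0 0 ^ 2 * c 0 2 ^ 2) + lam 1 * (c 1 0 ^ 2 * c 1 2 ^ 2) + lam 2 * (c 2 0 ^ 2 * c 2 2 ^ 2) + lam 3 * (c 3 0 ^ 2 * c 3 2 ^ 2) + lam 4 * (c 4 0 ^ 2 * c 4 2 ^ 2) + lam 5 * (c 5 0 ^ 2 * c 5 2 ^ 2) = 1 := by
    linear_combination (1/6) * P1 + (1/6) * P3 + (-1/12) * P8 + (-1/12) * P9
  have hS211 : lam 0 * (c 0 0 ^ 2 * c 0 1 * c 0 2) + lam 1 * (c 1 0 ^ 2 * c 1 1 * c 1 2) + lam 2 * (c 2 0 ^ 2 * c 2 1 * c 2 2) + lam 3 * (c 3 0 ^ 2 * c 3 1 * c 3 2) + lam 4 * (c 4 0 ^ 2 * c 4 1 * c 4 2) + lam 5 * (c 5 0 ^ 2 * c 5 1 * c 5 2) = 0 := by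
    linear_combination (1/12) * P1 + (1/12) * P2 + (1/12) * P3 + (-1/24) * P4 + (-1/24) * P5 + (-1/24) * P8 + (-1/24) * P9 + (-1/12) * P13 + (1/24) * P17 + (1/24) * P18
  have hS220 : lam 0 * (c 0 0 ^ 2 * c 0 1 ^ 2) + lam 1 * (c 1 0 ^ 2 * c 1 1 ^ 2) + lam 2 * (c 2 0 ^ 2 * c 2 1 ^ 2) + lam 3 * (c 3 0 ^ 2 * c 3 1 ^ 2) + lam 4 * (c 4 0 ^ 2 * c 4 1 ^ 2) + lam 5 * (c 5 0 ^ 2 * c 5 1 ^ 2) = 1 := by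
    linear_combination (1/6) * P1 + (1/6) * P2 + (-1/12) * P4 + (-1/12) * P5
  have hS301 : lam 0 * (c 0 0 ^ 3 * c 0 2) + lam 1 * (c 1 0 ^ 3 * c 1 2) + lam 2 * (c 2 0 ^ 3 * c 2 2) + lam 3 * (c 3 0 ^ 3 * c 3 2) + lam 4 * (c 4 0 ^ 3 * c 4 2) + lam 5 * (c 5 0 ^ 3 * c 5 2) = 0 := by
    linear_combination (1/2) * P1 + (-1/8) * P3 + (1/8) * P8 + (1/24) * P9 + (-1/24) * P10
  have hS310 : lam 0 * (c 0 0 ^ 3 * c 0 1) + lam 1 * (c 1 0 ^ 3 * c 1 1) + lam 2 * (c 2 0 ^ 3 * c 2 1) + lam 3 * (c 3 0 ^ 3 * c 3 1) + lam 4 * (c 4 0 ^ 3 * c 4 1) + lam 5 * (c 5 0 ^ 3 * c 5 1) = 0 := by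
    linear_combination (1/2) * P1 + (-1/8) * P2 + (1/8) * P4 + (1/24) * P5 + (-1/24) * P6
  have hS400 : lam 0 * (c 0 0 ^ 4) + lam 1 * (c 1 0 ^ 4) + lam 2 * (c 2 0 ^ 4) + lam 3 * (c 3 0 ^ 4) + lam 4 * (c 4 0 ^ 4) + lam 5 * (c 5 0 ^ 4) = a := by
    linear_combination (-1) * P1
  clear h P1 P2 P3 P4 P5 P6 P7 P8 P9 P10 P11 P12 P13 P14 P15 P16 P17 P18
  -- the catalecticant identity
  have key : ∀ (x : Fin 6 → ℝ) (i : Fin 6),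
      (∑ j, lam j * (∑ k, vm c j k * x k) * vm c j i) = Mm a x i := by
    intro x i
    fin_cases i
    · simp only [Fin.sum_univ_six, vm, Mm]
      linear_combination (x 0) * hS400 + (x 1) * hS220 + (x 2) * hS202 + (2*x 3) * hS310 + (2*x 4) * hS301 + (2*x 5) * hS211
    · simp only [Fin.sum_univ_six, vm, Mm]
      linear_combination (x 0) * hS220 + (x 1) * hS040 + (x 2) * hS022 + (2*x 3) * hS130 + (2*x 4) * hS121 + (2*x 5) * hS031
    · simp only [Fin.sum_univ_six, vm, Mm]
      linear_combination (x 0) * hS202 + (x 1) * hS022 + (x 2) * hS004 + (2*x 3) * hS112 + (2*x 4) * hS103 + (2*x 5) * hS013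
    · simp only [Fin.sum_univ_six, vm, Mm]
      linear_combination (2*x 0) * hS310 + (2*x 1) * hS130 + (2*x 2) * hS112 + (4*x 3) * hS220 + (4*x 4) * hS211 + (4*x 5) * hS121
    · simp only [Fin.sum_univ_six, vm, Mm]
      linear_combination (2*x 0) * hS301 + (2*x 1) * hS121 + (2*x 2) * hS103 + (4*x 3) * hS211 + (4*x 4) * hS202 + (4*x 5) * hS112
    · simp only [Fin.sum_univ_six, vm, Mm]
      linear_combination (2*x 0) * hS211 + (2*x 1) * hS031 + (2*x 2) * hS013 + (4*x 3) * hS121 + (4*x 4) * hS112 + (4*x 5) * hS022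
  have hMe3 : Mm a x3u 3 = 4 := by norm_num [Mm, x3u]
  by_cases ha : a = -2
  · -- the singular case a = -2
    by_cases hdet : (Matrix.of (vm c)).det = 0
    · obtain ⟨y, hy0, hVy⟩ := Matrix.exists_mulVec_eq_zero_iff.mpr hdet
      have hyj : ∀ j, (∑ k, vm c j k * y k) = 0 := by
        intro j
        have := congrFun hVy j
        simpa [Matrix.mulVec, dotProduct] using this
      have hMy : ∀ i, Mm a y i = 0 := by
        intro i
        rw [← key y i]
        refine Finset.sum_eq_zero fun j _ => ?_
        rw [hyj j]; ring
      have e0 := hMy 0; have e1 := hMy 1; have e2 := hMy 2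
      have e3 := hMy 3; have e4 := hMy 4; have e5 := hMy 5
      simp only [Mm] at e0 e1 e2 e3 e4 e5
      rw [ha] at e0 e1 e2
      have hy1 : y 1 = y 0 := by linarith
      have hy2 : y 2 = y 0 := by linarith
      have hy3 : y 3 = 0 := by linarith
      have hy4 : y 4 = 0 := by linarith
      have hy5 : y 5 = 0 := by linarith
      have hy00 : y 0 ≠ 0 := by
        intro h0
        apply hy0
        funext i
        fin_cases i
        exacts [h0, hy1.trans h0, hy2.trans h0, hy3, hy4, hy5]
      have hsj : ∀ j, c j 0 ^ 2 + c j 1 ^ 2 + c j 2 ^ 2 = 0 := by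
        intro j
        have hj := hyj j
        simp only [Fin.sum_univ_six, vm] at hj
        have hz : (c j 0 ^ 2 + c j 1 ^ 2 + c j 2 ^ 2) * y 0 = 0 := by
          linear_combination hj - c j 1 ^ 2 * hy1 - c j 2 ^ 2 * hy2
            - (2*(c j 0 * c j 1)) * hy3 - (2*(c j 0 * c j 2)) * hy4 - (2*(c j 1 * c j 2)) * hy5
        exact (mul_eq_zero.mp hz).resolve_right hy00
      have hc0 : ∀ j : Fin 6, c j 0 = 0 := by
        intro j
        have h20 : c j 0 ^ 2 = 0 :=
          le_antisymm (by linarith [hsj j, sq_nonneg (c j 1), sq_nonneg (c j 2)]) (sq_nonneg _)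
        exact pow_eq_zero_iff two_ne_zero |>.mp h20
      have hc1 : ∀ j : Fin 6, c j 1 = 0 := by
        intro j
        have h20 : c j 1 ^ 2 = 0 :=
          le_antisymm (by linarith [hsj j, sq_nonneg (c j 0), sq_nonneg (c j 2)]) (sq_nonneg _)
        exact pow_eq_zero_iff two_ne_zero |>.mp h20
      have k3 := key x3u 3
      rw [hMe3] at k3
      simp only [Fin.sum_univ_six, vm, x3u] at k3
      simp only [hc0, hc1] at k3
      norm_num at k3
    · -- nondegenerate vectors, a = -2 : use the kernel vector (1,1,1,0,0,0)
      have hq : ∀ i, Mm a q0v i = 0 := by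
        intro i
        rw [ha]
        fin_cases i <;> norm_num [Mm, q0v]
      have h1 : ∀ i, ((Matrix.of (vm c)).transpose.mulVec
          (fun j' => lam j' * (∑ k, vm c j' k * q0v k))) i = 0 := by
        intro i
        have : ((Matrix.of (vm c)).transpose.mulVec
            (fun j' => lam j' * (∑ k, vm c j' k * q0v k))) i
            = ∑ j', lam j' * (∑ k, vm c j' k * q0v k) * vm c j' i := by
          simp only [Matrix.mulVec, dotProduct, Matrix.transpose_apply, Matrix.of_apply]
          exact Finset.sum_congr rfl fun j' _ => by ring
        rw [this, key q0v i, hq i]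
      have hdetT : ((Matrix.of (vm c)).transpose).det ≠ 0 := by
        rw [Matrix.det_transpose]; exact hdet
      have h2 : (fun j' => lam j' * (∑ k, vm c j' k * q0v k)) = (0 : Fin 6 → ℝ) := by
        apply inj6 _ hdetT
        rw [Matrix.mulVec_zero]
        funext i
        exact h1 i
      have hls : ∀ j, lam j * (∑ k, vm c j k * q0v k) = 0 := fun j => congrFun h2 j
      have hlam0 : ∀ j : Fin 6, lam j = 0 := by
        intro j
        have hj := hls j
        rcases mul_eq_zero.mp hj with hl | hs
        · exact hl
        · exfalso
          simp only [Fin.sum_univ_six, vm, q0v] at hs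
          have hs' : c j 0 ^ 2 + c j 1 ^ 2 + c j 2 ^ 2 = 0 := by linarith
          have hz0 : c j 0 = 0 := pow_eq_zero_iff two_ne_zero |>.mp
            (le_antisymm (by linarith [sq_nonneg (c j 1), sq_nonneg (c j 2)]) (sq_nonneg _))
          have hz1 : c j 1 = 0 := pow_eq_zero_iff two_ne_zero |>.mp
            (le_antisymm (by linarith [sq_nonneg (c j 0), sq_nonneg (c j 2)]) (sq_nonneg _))
          have hz2 : c j 2 = 0 := pow_eq_zero_iff two_ne_zero |>.mp
            (le_antisymm (by linarith [sq_nonneg (c j 0), sq_nonneg (c j 1)]) (sq_nonneg _))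
          apply hdet
          apply Matrix.det_eq_zero_of_row_eq_zero j
          intro k
          fin_cases k <;> simp [vm, hz0, hz1, hz2]
      have k3 := key x3u 3
      rw [hMe3] at k3
      simp only [Fin.sum_univ_six, hlam0] at k3
      norm_num at k3
  · -- a ≠ -2 : the catalecticant is invertible
    have hD : (a-1)*(a+2) ≠ 0 := by
      intro hz
      rcases mul_eq_zero.mp hz with h' | h'
      · linarith
      · exact ha (by linarith)
    by_cases hdet : (Matrix.of (vm c)).det = 0
    · obtain ⟨y, hy0, hVy⟩ := Matrix.exists_mulVec_eq_zero_iff.mpr hdet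
      have hyj : ∀ j, (∑ k, vm c j k * y k) = 0 := by
        intro j
        have := congrFun hVy j
        simpa [Matrix.mulVec, dotProduct] using this
      have hMy : ∀ i, Mm a y i = 0 := by
        intro i
        rw [← key y i]
        refine Finset.sum_eq_zero fun j _ => ?_
        rw [hyj j]; ring
      have e0 := hMy 0; have e1 := hMy 1; have e2 := hMy 2
      have e3 := hMy 3; have e4 := hMy 4; have e5 := hMy 5
      simp only [Mm] at e0 e1 e2 e3 e4 e5
      have hy0c : y 0 = 0 := by
        have hz : (a-1)*(a+2) * y 0 = 0 := by linear_combination (a+1) * e0 - e1 - e2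
        exact (mul_eq_zero.mp hz).resolve_left hD
      have hy1c : y 1 = 0 := by
        have hz : (a-1)*(a+2) * y 1 = 0 := by linear_combination (a+1) * e1 - e0 - e2
        exact (mul_eq_zero.mp hz).resolve_left hD
      have hy2c : y 2 = 0 := by
        have hz : (a-1)*(a+2) * y 2 = 0 := by linear_combination (a+1) * e2 - e0 - e1
        exact (mul_eq_zero.mp hz).resolve_left hD
      have hy3c : y 3 = 0 := by linarith
      have hy4c : y 4 = 0 := by linarith
      have hy5c : y 5 = 0 := by linarith
      apply hy0
      funext i
      fin_cases i
      exacts [hy0c, hy1c, hy2c, hy3c, hy4c, hy5c]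
    · -- main case : all dual values have one sign
      have hdetT : ((Matrix.of (vm c)).transpose).det ≠ 0 := by
        rw [Matrix.det_transpose]; exact hdet
      have hMN : ∀ (x : Fin 6 → ℝ) (i : Fin 6), Mm a (Nm a x) i = x i := by
        intro x i
        have ha1 : a - 1 ≠ 0 := left_ne_zero_of_mul hD
        have ha2 : a + 2 ≠ 0 := right_ne_zero_of_mul hD
        fin_cases i <;> simp only [Mm, Nm] <;> field_simp <;> ring_nf <;> rfl
      have hsingle : ∀ j : Fin 6, lam j * (∑ k, vm c j k * Nm a (vm c j) k) = 1 := by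
        intro j
        have h1 : ∀ i, ((Matrix.of (vm c)).transpose.mulVec
            (fun j' => lam j' * (∑ k, vm c j' k * Nm a (vm c j) k))) i = vm c j i := by
          intro i
          have : ((Matrix.of (vm c)).transpose.mulVec
              (fun j' => lam j' * (∑ k, vm c j' k * Nm a (vm c j) k))) i
              = ∑ j', lam j' * (∑ k, vm c j' k * Nm a (vm c j) k) * vm c j' i := by
            simp only [Matrix.mulVec, dotProduct, Matrix.transpose_apply, Matrix.of_apply]
            exact Finset.sum_congr rfl fun j' _ => by ring
          rw [this, key (Nm a (vm c j)) i, hMN (vm c j) i]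
        have hsngl : ((Matrix.of (vm c)).transpose.mulVec (Pi.single j 1)) = fun i => vm c j i := by
          funext i
          simp [Matrix.mulVec, dotProduct, Pi.single_apply, mul_ite, Finset.sum_ite_eq]
        have h2 : (fun j' => lam j' * (∑ k, vm c j' k * Nm a (vm c j) k)) = Pi.single j 1 := by
          apply inj6 _ hdetT
          rw [hsngl]
          funext i
          exact h1 i
        have := congrFun h2 j
        simpa using this
      have hg : ∀ j : Fin 6, ((a-1)*(a+2)) * (∑ k, vm c j k * Nm a (vm c j) k)
          = (a+1) * (c j 0^4 + c j 1^4 + c j 2^4)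
            + (a^2+a-4) * (c j 0^2 * c j 1^2 + c j 0^2 * c j 2^2 + c j 1^2 * c j 2^2) := by
        intro j
        have ha1 : a - 1 ≠ 0 := left_ne_zero_of_mul hD
        have ha2 : a + 2 ≠ 0 := right_ne_zero_of_mul hD
        simp only [Fin.sum_univ_six, vm, Nm]
        field_simp
        ring
      have hPle : ∀ j : Fin 6, (a+1) * (c j 0^4 + c j 1^4 + c j 2^4)
          + (a^2+a-4) * (c j 0^2 * c j 1^2 + c j 0^2 * c j 2^2 + c j 1^2 * c j 2^2) ≤ 0 :=
        fun j => Pnonpos a (c j 0) (c j 1) (c j 2) h₁ h₂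
      by_cases hlt : a < -2
      · -- negative definite dual form : all lam j < 0, contradiction with positive entry
        have hD2 : 0 < (a-1)*(a+2) :=
          mul_pos_of_neg_of_neg (by linarith) (by linarith)
        have hneg : ∀ j : Fin 6, lam j < 0 := by
          intro j
          have hgle : (∑ k, vm c j k * Nm a (vm c j) k) ≤ 0 := by
            by_contra hgt
            push_neg at hgt
            have := mul_pos hD2 hgt
            rw [hg j] at this
            linarith [hPle j]
          by_contra hge
          push_neg at hge
          nlinarith [hsingle j]
        have k3 := key x3u 3
        rw [hMe3] at k3
        simp only [Fin.sum_univ_six, vm, x3u] at k3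
        have hfin : lam 0 * (2 * (c 0 0 * c 0 1)) ^ 2 + lam 1 * (2 * (c 1 0 * c 1 1)) ^ 2 + lam 2 * (2 * (c 2 0 * c 2 1)) ^ 2 + lam 3 * (2 * (c 3 0 * c 3 1)) ^ 2 + lam 4 * (2 * (c 4 0 * c 4 1)) ^ 2 + lam 5 * (2 * (c 5 0 * c 5 1)) ^ 2 = 4 := by linear_combination k3
        have t0 : lam 0 * (2 * (c 0 0 * c 0 1)) ^ 2 ≤ 0 :=
          mul_nonpos_iff.mpr (Or.inr ⟨(hneg 0).le, sq_nonneg _⟩)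
        have t1 : lam 1 * (2 * (c 1 0 * c 1 1)) ^ 2 ≤ 0 :=
          mul_nonpos_iff.mpr (Or.inr ⟨(hneg 1).le, sq_nonneg _⟩)
        have t2 : lam 2 * (2 * (c 2 0 * c 2 1)) ^ 2 ≤ 0 :=
          mul_nonpos_iff.mpr (Or.inr ⟨(hneg 2).le, sq_nonneg _⟩)
        have t3 : lam 3 * (2 * (c 3 0 * c 3 1)) ^ 2 ≤ 0 :=
          mul_nonpos_iff.mpr (Or.inr ⟨(hneg 3).le, sq_nonneg _⟩)
        have t4 : lam 4 * (2 * (c 4 0 * c 4 1)) ^ 2 ≤ 0 :=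
          mul_nonpos_iff.mpr (Or.inr ⟨(hneg 4).le, sq_nonneg _⟩)
        have t5 : lam 5 * (2 * (c 5 0 * c 5 1)) ^ 2 ≤ 0 :=
          mul_nonpos_iff.mpr (Or.inr ⟨(hneg 5).le, sq_nonneg _⟩)
        linarith
      · -- positive definite dual form : all lam j > 0, contradiction with negative entry
        have hgt2 : -2 < a := lt_of_le_of_ne (not_lt.mp hlt) (Ne.symm ha)
        have hD2 : (a-1)*(a+2) < 0 :=
          mul_neg_of_neg_of_pos (by linarith) (by linarith)
        have hpos : ∀ j : Fin 6, 0 < lam j := by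
          intro j
          have hgge : 0 ≤ (∑ k, vm c j k * Nm a (vm c j) k) := by
            by_contra hgt
            push_neg at hgt
            have := mul_pos_of_neg_of_neg hD2 hgt
            rw [hg j] at this
            linarith [hPle j]
          by_contra hge
          push_neg at hge
          nlinarith [hsingle j]
        have k0 := key x01 0
        have k1 := key x01 1
        simp only [Fin.sum_univ_six, vm, Mm, x01] at k0 k1
        have hfin : lam 0 * (c 0 0 ^ 2 - c 0 1 ^ 2) ^ 2 + lam 1 * (c 1 0 ^ 2 - c 1 1 ^ 2) ^ 2 + lam 2 * (c 2 0 ^ 2 - c 2 1 ^ 2) ^ 2 + lam 3 * (c 3 0 ^ 2 - c 3 1 ^ 2) ^ 2 + lam 4 * (c 4 0 ^ 2 - c 4 1 ^ 2) ^ 2 + lam 5 * (c 5 0 ^ 2 - c 5 1 ^ 2) ^ 2 = 2*a - 2 := by linear_combination k0 - k1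
        have t0 : 0 ≤ lam 0 * (c 0 0 ^ 2 - c 0 1 ^ 2) ^ 2 := mul_nonneg (hpos 0).le (sq_nonneg _)
        have t1 : 0 ≤ lam 1 * (c 1 0 ^ 2 - c 1 1 ^ 2) ^ 2 := mul_nonneg (hpos 1).le (sq_nonneg _)
        have t2 : 0 ≤ lam 2 * (c 2 0 ^ 2 - c 2 1 ^ 2) ^ 2 := mul_nonneg (hpos 2).le (sq_nonneg _)
        have t3 : 0 ≤ lam 3 * (c 3 0 ^ 2 - c 3 1 ^ 2) ^ 2 := mul_nonneg (hpos 3).le (sq_nonneg _)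
        have t4 : 0 ≤ lam 4 * (c 4 0 ^ 2 - c 4 1 ^ 2) ^ 2 := mul_nonneg (hpos 4).le (sq_nonneg _)
        have t5 : 0 ≤ lam 5 * (c 5 0 ^ 2 - c 5 1 ^ 2) ^ 2 := mul_nonneg (hpos 5).le (sq_nonneg _)
        linarith



private lemma upper_eq (a : ℝ) :
    fa a = ∑ j : Fin 7, MvPolynomial.C (w7 a j) *
      (∑ i : Fin 3, MvPolynomial.C (L7 j i) * MvPolynomial.X i) ^ 4 := by
  apply MvPolynomial.funext
  intro p
  simp only [Fin.sum_univ_seven, Fin.sum_univ_three, fa, map_sum, eval_add, eval_mul, eval_pow,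
    eval_C, eval_X, w7, L7]
  ring

/-- For `−3 ≤ a < −1`, the quartic `f_a` has real rank exactly 7. -/
theorem fa_rank_eq_seven' (a : ℝ) (h₁ : -3 ≤ a) (h₂ : a < -1) :
    realRank 3 4 (fa a) = 7 := by
  rw [realRank]
  have h7 : 7 ∈ {k | ∃ (lam : Fin k → ℝ) (l : Fin k → Fin 3 → ℝ),
      fa a = ∑ j, MvPolynomial.C (lam j) * (∑ i, MvPolynomial.C (l j i) * MvPolynomial.X i) ^ 4} :=
    ⟨w7 a, L7, upper_eq a⟩
  refine le_antisymm (Nat.sInf_le h7) (le_csInf ⟨7, h7⟩ ?_)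
  rintro k ⟨lam, l, hk⟩
  by_contra hlt
  push_neg at hlt
  have hk6 : k ≤ 6 := by omega
  exact no_six a h₁ h₂
    (fun j => if hj : (j : ℕ) < k then lam ⟨j, hj⟩ else 0)
    (fun j i => if hj : (j : ℕ) < k then l ⟨j, hj⟩ i else 0)
    (by
      intro x y z
      have hL : MvPolynomial.eval (![x, y, z] : Fin 3 → ℝ) (fa a)
          = a * (x^4+y^4+z^4) + 6 * (x^2*y^2+x^2*z^2+y^2*z^2) := by
        simp only [fa, eval_add, eval_mul, eval_pow, eval_C, eval_X,
          Matrix.cons_val_zero, Matrix.cons_val_one, Matrix.head_cons,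
          Matrix.cons_val_two, Matrix.tail_cons]
      have hR : MvPolynomial.eval (![x, y, z] : Fin 3 → ℝ)
            (∑ j : Fin k, MvPolynomial.C (lam j)
              * (∑ i, MvPolynomial.C (l j i) * MvPolynomial.X i) ^ 4)
          = ∑ j : Fin k, lam j * (l j 0 * x + l j 1 * y + l j 2 * z)^4 := by
        rw [map_sum]
        refine Finset.sum_congr rfl fun j _ => ?_
        simp only [Fin.sum_univ_three, eval_add, eval_mul, eval_pow, eval_C, eval_X,
          Matrix.cons_val_zero, Matrix.cons_val_one, Matrix.head_cons,
          Matrix.cons_val_two, Matrix.tail_cons]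
      calc a * (x^4+y^4+z^4) + 6 * (x^2*y^2+x^2*z^2+y^2*z^2)
          = MvPolynomial.eval (![x, y, z] : Fin 3 → ℝ) (fa a) := hL.symm
        _ = ∑ j : Fin k, lam j * (l j 0 * x + l j 1 * y + l j 2 * z)^4 := by rw [hk, hR]
        _ = ∑ n ∈ Finset.range k, (if hj : n < k then
              lam ⟨n, hj⟩ * (l ⟨n, hj⟩ 0 * x + l ⟨n, hj⟩ 1 * y + l ⟨n, hj⟩ 2 * z)^4 else 0) := by
            rw [← Fin.sum_univ_eq_sum_range (fun n => if hj : n < k then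
              lam ⟨n, hj⟩ * (l ⟨n, hj⟩ 0 * x + l ⟨n, hj⟩ 1 * y + l ⟨n, hj⟩ 2 * z)^4 else 0) k]
            exact Finset.sum_congr rfl fun j _ => by simp [j.isLt]
        _ = ∑ n ∈ Finset.range 6, (if hj : n < k then
              lam ⟨n, hj⟩ * (l ⟨n, hj⟩ 0 * x + l ⟨n, hj⟩ 1 * y + l ⟨n, hj⟩ 2 * z)^4 else 0) :=
            Finset.sum_subset (Finset.range_subset_range.mpr hk6)
              (fun n _ hn => dif_neg (by simpa using hn))
        _ = ∑ j : Fin 6, (if hj : ((j : Fin 6) : ℕ) < k then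
              lam ⟨j, hj⟩ * (l ⟨j, hj⟩ 0 * x + l ⟨j, hj⟩ 1 * y + l ⟨j, hj⟩ 2 * z)^4 else 0) :=
            (Fin.sum_univ_eq_sum_range _ 6).symm
        _ = ∑ j : Fin 6, (fun j => if hj : (j : ℕ) < k then lam ⟨j, hj⟩ else 0) j
              * ((fun j i => if hj : (j : ℕ) < k then l ⟨j, hj⟩ i else 0) j 0 * x
                + (fun j i => if hj : (j : ℕ) < k then l ⟨j, hj⟩ i else 0) j 1 * y
                + (fun j i => if hj : (j : ℕ) < k then l ⟨j, hj⟩ i else 0) j 2 * z)^4 :=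
            Finset.sum_congr rfl fun j _ => by
              by_cases hj : (j : ℕ) < k <;> simp [hj])

end RankSeven
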